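/- Let S denote the unilateral shift on ℓ²(ℕ). On the Hilbert space H = ℓ²(ℕ) ⊕ (⊕_{j=1}^∞ ℓ²(ℕ)) ⊕ (⊕_{j=1}^∞ ℓ²(ℕ)), let T = S ⊕ (⊕_{j=1}^∞ (j/(j+1)) S) ⊕ (⊕_{j=1}^∞ (j/(j+1)) S*). Then for every y ∈ H, ‖(T*)^k y‖ → 0 as k → ∞; in particular, there is no unit vector y ∈ H with ‖(T*)^k y‖ = 1 for all k ≥ 0. -/

import Mathlib

open Filter ContinuousLinearMap

noncomputable section

/-- A conjugation on a complex Hilbert space `H` is a conjugate-linear, isometric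
involution `C : H → H`. -/
def IsConjugation {H : Type*} [NormedAddCommGroup H] [InnerProductSpace ℂ H]
    (C : H → H) : Prop :=
  (∀ x y : H, C (x + y) = C x + C y) ∧
  (∀ (a : ℂ) (x : H), C (a • x) = (starRingEnd ℂ) a • C x) ∧
  (∀ x : H, ‖C x‖ = ‖x‖) ∧
  (∀ x : H, C (C x) = x)

/-- A bounded operator `T` on a complex Hilbert space is complex symmetric if there is a
conjugation `C` with `T = C T* C`. -/
def IsComplexSymmetric {H : Type*} [NormedAddCommGroup H] [InnerProductSpace ℂ H]
    [CompleteSpace H] (T : H →L[ℂ] H) : Prop :=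
  ∃ C : H → H, IsConjugation C ∧
    ∀ x : H, T x = C (ContinuousLinearMap.adjoint T (C x))

/-- `ℓ²(ℕ)` over `ℂ`. -/
abbrev ellTwo : Type := lp (fun _ : ℕ => ℂ) 2

/-- `S` is the unilateral shift on `ℓ²(ℕ)`: `S (a₀, a₁, a₂, …) = (0, a₀, a₁, …)`. -/
def IsUnilateralShift (S : ellTwo →L[ℂ] ellTwo) : Prop :=
  ∀ a : ellTwo, S a 0 = 0 ∧ ∀ n : ℕ, S a (n + 1) = a n

/-- The coefficient `j/(j+1)`. -/
def coeff (j : ℕ+) : ℝ := (j : ℝ) / ((j : ℝ) + 1)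

/-- `⊕_{j=1}^∞ ℓ²(ℕ)`. -/
abbrev Bspace : Type := lp (fun _ : ℕ+ => ellTwo) 2

/-- The Hilbert space `H = ℓ²(ℕ) ⊕ (⊕_{j=1}^∞ ℓ²(ℕ)) ⊕ (⊕_{j=1}^∞ ℓ²(ℕ))`. -/
abbrev Hspace : Type := WithLp 2 (ellTwo × WithLp 2 (Bspace × Bspace))

/-- The operator `T = S ⊕ (⊕_{j=1}^∞ (j/(j+1)) S) ⊕ (⊕_{j=1}^∞ (j/(j+1)) S*)` on `H`,
acting coordinatewise. -/
def IsTheOperatorT (S : ellTwo →L[ℂ] ellTwo) (T : Hspace →L[ℂ] Hspace) : Prop :=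
  ∀ x : Hspace,
    (T x).ofLp.1 = S x.ofLp.1 ∧
    (∀ j : ℕ+, (T x).ofLp.2.ofLp.1 j = (coeff j : ℂ) • S (x.ofLp.2.ofLp.1 j)) ∧
    (∀ j : ℕ+, (T x).ofLp.2.ofLp.2 j = (coeff j : ℂ) • ContinuousLinearMap.adjoint S (x.ofLp.2.ofLp.2 j))

open scoped ENNReal

local notation "⟪" x ", " y "⟫" => @inner ℂ _ _ x y

lemma apply_eq_inner_single (b : ellTwo) (n : ℕ) : ⟪lp.single 2 n (1:ℂ), b⟫ = b n := by
  rw [lp.inner_single_left, RCLike.inner_apply]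
  simp

lemma shift_single (S : ellTwo →L[ℂ] ellTwo) (hS : IsUnilateralShift S) (n : ℕ) :
    S (lp.single 2 n (1:ℂ)) = lp.single 2 (n+1) (1:ℂ) := by
  apply lp.ext; funext m
  match m with
  | 0 => rw [(hS _).1, lp.single_apply]; simp
  | m+1 =>
    rw [(hS _).2 m, lp.single_apply, lp.single_apply]
    by_cases h : m = n
    · subst h; simp
    · rw [Pi.single_eq_of_ne h, Pi.single_eq_of_ne (by omega)]

lemma adjS_apply (S : ellTwo →L[ℂ] ellTwo) (hS : IsUnilateralShift S) (b : ellTwo) (n : ℕ) :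
    (ContinuousLinearMap.adjoint S b) n = b (n+1) := by
  rw [← apply_eq_inner_single (ContinuousLinearMap.adjoint S b) n,
    ContinuousLinearMap.adjoint_inner_right, shift_single S hS, apply_eq_inner_single]

lemma lp2_hasSum_norm_sq {ι : Type*} {E : ι → Type*} [∀ i, NormedAddCommGroup (E i)]
    (f : lp E 2) : HasSum (fun i => ‖f i‖ ^ (2:ℕ)) (‖f‖ ^ (2:ℕ)) := by
  have h := lp.hasSum_norm (p := 2) (by norm_num) f
  have h2 : (2:ℝ≥0∞).toReal = ((2:ℕ):ℝ) := by norm_num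
  simpa [h2, Real.rpow_natCast] using h

lemma shift_isometry (S : ellTwo →L[ℂ] ellTwo) (hS : IsUnilateralShift S) (a : ellTwo) :
    ‖S a‖ = ‖a‖ := by
  have h1 := lp2_hasSum_norm_sq (S a)
  have h2 := lp2_hasSum_norm_sq a
  have h3 : HasSum (fun n => ‖S a (n + 1)‖ ^ (2:ℕ)) (‖a‖ ^ (2:ℕ)) := by
    apply h2.congr_fun; intro n; rw [(hS a).2 n]
  rw [hasSum_nat_add_iff (f := fun n => ‖S a n‖ ^ (2:ℕ)) 1] at h3
  simp only [Finset.range_one, Finset.sum_singleton, (hS a).1] at h3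
  have := h1.unique (by simpa using h3)
  have hnn : 0 ≤ ‖a‖ := norm_nonneg _
  nlinarith [norm_nonneg (S a)]


section
variable (S : ellTwo →L[ℂ] ellTwo) (hS : IsUnilateralShift S)
  (T : Hspace →L[ℂ] Hspace) (hT : IsTheOperatorT S T)


include hT in
lemma adjT_fst (y : Hspace) :
    (ContinuousLinearMap.adjoint T y).ofLp.1 = ContinuousLinearMap.adjoint S y.ofLp.1 := by
  apply ext_inner_left ℂ
  intro v
  set x : Hspace := WithLp.toLp 2 (v, 0) with hxdef
  have hx : ⟪x, ContinuousLinearMap.adjoint T y⟫ = ⟪T x, y⟫ :=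
    ContinuousLinearMap.adjoint_inner_right T x y
  have h := hT x
  have hx1 : x.ofLp.1 = v := rfl
  have hx21 : x.ofLp.2.ofLp.1 = (0 : Bspace) := rfl
  have hx22 : x.ofLp.2.ofLp.2 = (0 : Bspace) := rfl
  have h1 : (T x).ofLp.1 = S v := h.1
  have h2 : ∀ j, (T x).ofLp.2.ofLp.1 j = 0 := by
    intro j; rw [h.2.1 j, hx21]; simp [lp.coeFn_zero]
  have h3 : ∀ j, (T x).ofLp.2.ofLp.2 j = 0 := by
    intro j; rw [h.2.2 j, hx22]; simp [lp.coeFn_zero]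
  simp only [WithLp.prod_inner_apply] at hx
  simp only [hx1, hx21, hx22, inner_zero_left, add_zero, zero_add] at hx
  rw [h1, lp.inner_eq_tsum (𝕜 := ℂ) ((T x).ofLp.2.ofLp.1) y.ofLp.2.ofLp.1,
    lp.inner_eq_tsum (𝕜 := ℂ) ((T x).ofLp.2.ofLp.2) y.ofLp.2.ofLp.2] at hx
  simp only [h2, h3] at hx
  simp only [inner_zero_left, tsum_zero, add_zero] at hx
  rw [hx, ContinuousLinearMap.adjoint_inner_right]

include hT in
lemma adjT_snd1 (y : Hspace) (j : ℕ+) :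
    (ContinuousLinearMap.adjoint T y).ofLp.2.ofLp.1 j
      = (coeff j : ℂ) • ContinuousLinearMap.adjoint S (y.ofLp.2.ofLp.1 j) := by
  apply ext_inner_left ℂ
  intro v
  set x : Hspace := WithLp.toLp 2 (0, WithLp.toLp 2 (lp.single 2 j v, 0)) with hxdef
  have hx : ⟪x, ContinuousLinearMap.adjoint T y⟫ = ⟪T x, y⟫ :=
    ContinuousLinearMap.adjoint_inner_right T x y
  have h := hT x
  have hx1 : x.ofLp.1 = (0 : ellTwo) := rfl
  have hx21 : x.ofLp.2.ofLp.1 = lp.single 2 j v := rfl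
  have hx22 : x.ofLp.2.ofLp.2 = (0 : Bspace) := rfl
  have h1 : (T x).ofLp.1 = 0 := by rw [h.1, hx1, map_zero]
  have h3 : ∀ j', (T x).ofLp.2.ofLp.2 j' = 0 := by
    intro j'; rw [h.2.2 j', hx22]; simp [lp.coeFn_zero]
  have h2 : ∀ j', j' ≠ j → (inner ℂ ((T x).ofLp.2.ofLp.1 j') (y.ofLp.2.ofLp.1 j') : ℂ) = 0 := by
    intro j' hj'
    rw [h.2.1 j', hx21, lp.single_apply_ne (E := fun _ : ℕ+ => ellTwo) 2 j v hj']
    simp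
  simp only [WithLp.prod_inner_apply] at hx
  rw [h1, lp.inner_eq_tsum (𝕜 := ℂ) ((T x).ofLp.2.ofLp.1) y.ofLp.2.ofLp.1,
    lp.inner_eq_tsum (𝕜 := ℂ) ((T x).ofLp.2.ofLp.2) y.ofLp.2.ofLp.2] at hx
  simp only [h3] at hx
  simp only [hx1, hx22, inner_zero_left, tsum_zero, add_zero, zero_add] at hx
  rw [lp.inner_single_left, tsum_eq_single j (fun j' hj' => h2 j' hj'),
    h.2.1 j, hx21, lp.single_apply_self] at hx
  rw [hx, inner_smul_left, inner_smul_right, Complex.conj_ofReal,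
    ContinuousLinearMap.adjoint_inner_right]

include hT in
lemma adjT_snd2 (y : Hspace) (j : ℕ+) :
    (ContinuousLinearMap.adjoint T y).ofLp.2.ofLp.2 j = (coeff j : ℂ) • S (y.ofLp.2.ofLp.2 j) := by
  apply ext_inner_left ℂ
  intro v
  set x : Hspace := WithLp.toLp 2 (0, WithLp.toLp 2 (0, lp.single 2 j v)) with hxdef
  have hx : ⟪x, ContinuousLinearMap.adjoint T y⟫ = ⟪T x, y⟫ :=
    ContinuousLinearMap.adjoint_inner_right T x y
  have h := hT x
  have hx1 : x.ofLp.1 = (0 : ellTwo) := rfl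
  have hx21 : x.ofLp.2.ofLp.1 = (0 : Bspace) := rfl
  have hx22 : x.ofLp.2.ofLp.2 = lp.single 2 j v := rfl
  have h1 : (T x).ofLp.1 = 0 := by rw [h.1, hx1, map_zero]
  have h2 : ∀ j', (T x).ofLp.2.ofLp.1 j' = 0 := by
    intro j'; rw [h.2.1 j', hx21]; simp [lp.coeFn_zero]
  have h3 : ∀ j', j' ≠ j → (inner ℂ ((T x).ofLp.2.ofLp.2 j') (y.ofLp.2.ofLp.2 j') : ℂ) = 0 := by
    intro j' hj'
    rw [h.2.2 j', hx22, lp.single_apply_ne (E := fun _ : ℕ+ => ellTwo) 2 j v hj']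
    simp
  simp only [WithLp.prod_inner_apply] at hx
  rw [h1, lp.inner_eq_tsum (𝕜 := ℂ) ((T x).ofLp.2.ofLp.1) y.ofLp.2.ofLp.1,
    lp.inner_eq_tsum (𝕜 := ℂ) ((T x).ofLp.2.ofLp.2) y.ofLp.2.ofLp.2] at hx
  simp only [h2] at hx
  simp only [hx1, hx21, inner_zero_left, tsum_zero, add_zero, zero_add] at hx
  rw [lp.inner_single_left, tsum_eq_single j (fun j' hj' => h3 j' hj'),
    h.2.2 j, hx22, lp.single_apply_self] at hx
  rw [hx, inner_smul_left, inner_smul_right, Complex.conj_ofReal,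
    ContinuousLinearMap.adjoint_inner_left]

include hT in
lemma adjT_pow (y : Hspace) (k : ℕ) :
    ((ContinuousLinearMap.adjoint T ^ k) y).ofLp.1 = (ContinuousLinearMap.adjoint S ^ k) y.ofLp.1
    ∧ (∀ j, ((ContinuousLinearMap.adjoint T ^ k) y).ofLp.2.ofLp.1 j
        = ((coeff j : ℂ) ^ k) • (ContinuousLinearMap.adjoint S ^ k) (y.ofLp.2.ofLp.1 j))
    ∧ (∀ j, ((ContinuousLinearMap.adjoint T ^ k) y).ofLp.2.ofLp.2 j
        = ((coeff j : ℂ) ^ k) • (S ^ k) (y.ofLp.2.ofLp.2 j)) := by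
  induction k generalizing y with
  | zero => refine ⟨?_, fun j => ?_, fun j => ?_⟩ <;> simp
  | succ k ih =>
    have hA : (ContinuousLinearMap.adjoint T ^ (k+1)) y
        = (ContinuousLinearMap.adjoint T ^ k) (ContinuousLinearMap.adjoint T y) := by
      rw [pow_succ, ContinuousLinearMap.mul_apply]
    refine ⟨?_, fun j => ?_, fun j => ?_⟩
    · rw [hA, (ih _).1, adjT_fst S T hT, ← ContinuousLinearMap.mul_apply, ← pow_succ]
    · rw [hA, (ih _).2.1 j, adjT_snd1 S T hT, map_smul, smul_smul,
        ← ContinuousLinearMap.mul_apply, ← pow_succ, ← pow_succ]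
    · rw [hA, (ih _).2.2 j, adjT_snd2 S T hT, map_smul, smul_smul,
        ← ContinuousLinearMap.mul_apply, ← pow_succ, ← pow_succ]
end

section
variable (S : ellTwo →L[ℂ] ellTwo) (hS : IsUnilateralShift S)

include hS in
lemma adjSpow_apply (k : ℕ) (b : ellTwo) (n : ℕ) :
    ((ContinuousLinearMap.adjoint S ^ k) b) n = b (n + k) := by
  induction k generalizing b n with
  | zero => simp
  | succ k ih =>
    rw [pow_succ, ContinuousLinearMap.mul_apply, ih, adjS_apply S hS, add_assoc]

include hS in
lemma tendsto_adjSpow_sq (b : ellTwo) :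
    Tendsto (fun k => ‖(ContinuousLinearMap.adjoint S ^ k) b‖ ^ (2:ℕ)) atTop (nhds 0) := by
  have key : ∀ k, ‖(ContinuousLinearMap.adjoint S ^ k) b‖ ^ (2:ℕ)
      = ∑' n, ‖b (n + k)‖ ^ (2:ℕ) := by
    intro k
    exact ((lp2_hasSum_norm_sq ((ContinuousLinearMap.adjoint S ^ k) b)).congr_fun
      (fun n => by rw [adjSpow_apply S hS])).tsum_eq.symm
  exact (tendsto_sum_nat_add (fun n => ‖b n‖ ^ (2:ℕ))).congr (fun k => (key k).symm)

include hS in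
lemma adjS_norm_le (b : ellTwo) : ‖ContinuousLinearMap.adjoint S b‖ ≤ ‖b‖ := by
  have hS1 : ‖S‖ ≤ 1 :=
    S.opNorm_le_bound zero_le_one (fun a => by rw [shift_isometry S hS a, one_mul])
  have h : ‖ContinuousLinearMap.adjoint S‖ = ‖S‖ :=
    (ContinuousLinearMap.adjoint (𝕜 := ℂ) (E := ellTwo) (F := ellTwo)).norm_map S
  calc ‖ContinuousLinearMap.adjoint S b‖ ≤ ‖ContinuousLinearMap.adjoint S‖ * ‖b‖ :=
        (ContinuousLinearMap.adjoint S).le_opNorm b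
    _ ≤ 1 * ‖b‖ := by apply mul_le_mul_of_nonneg_right _ (norm_nonneg b); rw [h]; exact hS1
    _ = ‖b‖ := one_mul _

include hS in
lemma adjSpow_norm_le (k : ℕ) (b : ellTwo) :
    ‖(ContinuousLinearMap.adjoint S ^ k) b‖ ≤ ‖b‖ := by
  induction k generalizing b with
  | zero => simp
  | succ k ih =>
    rw [pow_succ, ContinuousLinearMap.mul_apply]
    exact (ih _).trans (adjS_norm_le S hS b)

include hS in
lemma Spow_isometry (k : ℕ) (a : ellTwo) : ‖(S ^ k) a‖ = ‖a‖ := by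
  induction k generalizing a with
  | zero => simp
  | succ k ih => rw [pow_succ, ContinuousLinearMap.mul_apply, ih, shift_isometry S hS]

end

lemma coeff_nonneg (j : ℕ+) : 0 ≤ coeff j := by
  unfold coeff; positivity

lemma coeff_lt_one (j : ℕ+) : coeff j < 1 := by
  rw [coeff, div_lt_one (by positivity)]; linarith

lemma norm_coeff_smul (j : ℕ+) (k : ℕ) (u : ellTwo) :
    ‖((coeff j : ℂ)) ^ k • u‖ = (coeff j) ^ k * ‖u‖ := by
  rw [norm_smul, norm_pow, Complex.norm_real, Real.norm_eq_abs,
    abs_of_nonneg (coeff_nonneg j)]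

section
variable (S : ellTwo →L[ℂ] ellTwo) (hS : IsUnilateralShift S)
  (T : Hspace →L[ℂ] Hspace) (hT : IsTheOperatorT S T)

set_option maxHeartbeats 2000000 in
include hS hT in
lemma main_tendsto (y : Hspace) :
    Tendsto (fun k : ℕ => ‖((ContinuousLinearMap.adjoint T) ^ k) y‖) atTop (nhds 0) := by
  set A := ContinuousLinearMap.adjoint T with hA
  have hn : ∀ z : Hspace, ‖z‖ ^ (2:ℕ)
      = ‖z.ofLp.1‖ ^ (2:ℕ) + ((∑' j : ℕ+, ‖z.ofLp.2.ofLp.1 j‖ ^ (2:ℕ)) + ∑' j : ℕ+, ‖z.ofLp.2.ofLp.2 j‖ ^ (2:ℕ)) := by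
    intro z
    rw [WithLp.prod_norm_sq_eq_of_L2, WithLp.prod_norm_sq_eq_of_L2,
      (lp2_hasSum_norm_sq z.ofLp.2.ofLp.1).tsum_eq, (lp2_hasSum_norm_sq z.ofLp.2.ofLp.2).tsum_eq]
    rfl
  have t1 := tendsto_adjSpow_sq S hS y.ofLp.1
  have hco2 : ∀ (k : ℕ) (j : ℕ+), ‖((A ^ k) y).ofLp.2.ofLp.1 j‖ ^ (2:ℕ)
      = ((coeff j) ^ k) ^ (2:ℕ) * ‖(ContinuousLinearMap.adjoint S ^ k) (y.ofLp.2.ofLp.1 j)‖ ^ (2:ℕ) := by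
    intro k j
    rw [hA, (adjT_pow S T hT y k).2.1 j, norm_coeff_smul, mul_pow]
  have hco3 : ∀ (k : ℕ) (j : ℕ+), ‖((A ^ k) y).ofLp.2.ofLp.2 j‖ ^ (2:ℕ)
      = ((coeff j) ^ k) ^ (2:ℕ) * ‖y.ofLp.2.ofLp.2 j‖ ^ (2:ℕ) := by
    intro k j
    rw [hA, (adjT_pow S T hT y k).2.2 j, norm_coeff_smul, Spow_isometry S hS, mul_pow]
  have hc1 : ∀ (j : ℕ+) (k : ℕ), ((coeff j) ^ k) ^ (2:ℕ) ≤ 1 := by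
    intro j k
    exact pow_le_one₀ (pow_nonneg (coeff_nonneg j) k) (pow_le_one₀ (coeff_nonneg j) (coeff_lt_one j).le)
  have hcsq : ∀ j : ℕ+, Tendsto (fun k : ℕ => ((coeff j) ^ k) ^ (2:ℕ)) atTop (nhds 0) := by
    intro j
    have h0 : (0:ℝ) ≤ (coeff j) ^ (2:ℕ) := by positivity
    have h1 : (coeff j) ^ (2:ℕ) < 1 := by
      nlinarith [coeff_lt_one j, coeff_nonneg j]
    exact (tendsto_pow_atTop_nhds_zero_of_lt_one h0 h1).congr
      (fun k => by rw [← pow_right_comm])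
  have t2 : Tendsto (fun k : ℕ => ∑' j : ℕ+, ‖((A ^ k) y).ofLp.2.ofLp.1 j‖ ^ (2:ℕ)) atTop (nhds 0) := by
    have hb : Summable (fun j : ℕ+ => ‖y.ofLp.2.ofLp.1 j‖ ^ (2:ℕ)) := (lp2_hasSum_norm_sq y.ofLp.2.ofLp.1).summable
    have hab : ∀ j : ℕ+, Tendsto (fun k : ℕ => ‖((A ^ k) y).ofLp.2.ofLp.1 j‖ ^ (2:ℕ)) atTop (nhds 0) := by
      intro j
      apply squeeze_zero (g := fun k : ℕ => ((coeff j) ^ k) ^ (2:ℕ) * ‖y.ofLp.2.ofLp.1 j‖ ^ (2:ℕ))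
        (fun k => by positivity)
      · intro k
        rw [hco2 k j]
        exact mul_le_mul_of_nonneg_left
          (pow_le_pow_left₀ (norm_nonneg _) (adjSpow_norm_le S hS k _) 2) (by positivity)
      · simpa using (hcsq j).mul_const (‖y.ofLp.2.ofLp.1 j‖ ^ (2:ℕ))
    have hbd : ∀ᶠ (k : ℕ) in atTop, ∀ j : ℕ+,
        ‖‖((A ^ k) y).ofLp.2.ofLp.1 j‖ ^ (2:ℕ)‖ ≤ ‖y.ofLp.2.ofLp.1 j‖ ^ (2:ℕ) := by
      filter_upwards with k j
      rw [Real.norm_of_nonneg (by positivity), hco2 k j]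
      calc ((coeff j) ^ k) ^ (2:ℕ) * ‖(ContinuousLinearMap.adjoint S ^ k) (y.ofLp.2.ofLp.1 j)‖ ^ (2:ℕ)
          ≤ 1 * ‖y.ofLp.2.ofLp.1 j‖ ^ (2:ℕ) := by
            apply mul_le_mul (hc1 j k)
              (pow_le_pow_left₀ (norm_nonneg _) (adjSpow_norm_le S hS k _) 2)
              (by positivity) zero_le_one
        _ = ‖y.ofLp.2.ofLp.1 j‖ ^ (2:ℕ) := one_mul _
    have key := tendsto_tsum_of_dominated_convergence (𝓕 := atTop)
      (f := fun (k : ℕ) (j : ℕ+) => ‖((A ^ k) y).ofLp.2.ofLp.1 j‖ ^ (2:ℕ))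
      (g := fun _ : ℕ+ => (0:ℝ)) (bound := fun j : ℕ+ => ‖y.ofLp.2.ofLp.1 j‖ ^ (2:ℕ)) hb hab hbd
    rw [tsum_zero] at key
    exact key
  have t3 : Tendsto (fun k : ℕ => ∑' j : ℕ+, ‖((A ^ k) y).ofLp.2.ofLp.2 j‖ ^ (2:ℕ)) atTop (nhds 0) := by
    have hb : Summable (fun j : ℕ+ => ‖y.ofLp.2.ofLp.2 j‖ ^ (2:ℕ)) := (lp2_hasSum_norm_sq y.ofLp.2.ofLp.2).summable
    have hab : ∀ j : ℕ+, Tendsto (fun k : ℕ => ‖((A ^ k) y).ofLp.2.ofLp.2 j‖ ^ (2:ℕ)) atTop (nhds 0) := by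
      intro j
      have : Tendsto (fun k : ℕ => ((coeff j) ^ k) ^ (2:ℕ) * ‖y.ofLp.2.ofLp.2 j‖ ^ (2:ℕ)) atTop (nhds 0) := by
        simpa using (hcsq j).mul_const (‖y.ofLp.2.ofLp.2 j‖ ^ (2:ℕ))
      exact this.congr (fun k => (hco3 k j).symm)
    have hbd : ∀ᶠ (k : ℕ) in atTop, ∀ j : ℕ+,
        ‖‖((A ^ k) y).ofLp.2.ofLp.2 j‖ ^ (2:ℕ)‖ ≤ ‖y.ofLp.2.ofLp.2 j‖ ^ (2:ℕ) := by
      filter_upwards with k j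
      rw [Real.norm_of_nonneg (by positivity), hco3 k j]
      calc ((coeff j) ^ k) ^ (2:ℕ) * ‖y.ofLp.2.ofLp.2 j‖ ^ (2:ℕ) ≤ 1 * ‖y.ofLp.2.ofLp.2 j‖ ^ (2:ℕ) :=
            mul_le_mul_of_nonneg_right (hc1 j k) (by positivity)
        _ = ‖y.ofLp.2.ofLp.2 j‖ ^ (2:ℕ) := one_mul _
    have key := tendsto_tsum_of_dominated_convergence (𝓕 := atTop)
      (f := fun (k : ℕ) (j : ℕ+) => ‖((A ^ k) y).ofLp.2.ofLp.2 j‖ ^ (2:ℕ))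
      (g := fun _ : ℕ+ => (0:ℝ)) (bound := fun j : ℕ+ => ‖y.ofLp.2.ofLp.2 j‖ ^ (2:ℕ)) hb hab hbd
    rw [tsum_zero] at key
    exact key
  have t1' : Tendsto (fun k : ℕ => ‖((A ^ k) y).ofLp.1‖ ^ (2:ℕ)) atTop (nhds 0) :=
    t1.congr (fun k => by rw [hA, (adjT_pow S T hT y k).1])
  have hsq : Tendsto (fun k : ℕ => ‖(A ^ k) y‖ ^ (2:ℕ)) atTop (nhds 0) := by
    have := t1'.add (t2.add t3)
    simp only [add_zero] at this
    exact this.congr (fun k => (hn ((A ^ k) y)).symm)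
  have h4 : Tendsto (fun k : ℕ => Real.sqrt (‖(A ^ k) y‖ ^ (2:ℕ))) atTop (nhds (Real.sqrt 0)) :=
    (Real.continuous_sqrt.tendsto _).comp hsq
  rw [Real.sqrt_zero] at h4
  exact h4.congr (fun k => Real.sqrt_sq (norm_nonneg _))

end

/-- For `T = S ⊕ (⊕_j (j/(j+1)) S) ⊕ (⊕_j (j/(j+1)) S*)` on
`H = ℓ²(ℕ) ⊕ (⊕_{j=1}^∞ ℓ²(ℕ)) ⊕ (⊕_{j=1}^∞ ℓ²(ℕ))`, the powers of `T*` tend strongly to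
zero; in particular there is no unit vector `y` with `‖(T*)^k y‖ = 1` for all `k ≥ 0`. -/
theorem adjoint_pow_tendsto_zero_T
    (S : ellTwo →L[ℂ] ellTwo) (hS : IsUnilateralShift S)
    (T : Hspace →L[ℂ] Hspace) (hT : IsTheOperatorT S T) :
    (∀ y : Hspace,
      Tendsto (fun k : ℕ => ‖((ContinuousLinearMap.adjoint T) ^ k) y‖) atTop (nhds 0)) ∧
    ¬ ∃ y : Hspace, ‖y‖ = 1 ∧
        ∀ k : ℕ, ‖((ContinuousLinearMap.adjoint T) ^ k) y‖ = 1 := by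
  constructor
  · exact fun y => main_tendsto S hS T hT y
  · rintro ⟨y, -, hy⟩
    have h := main_tendsto S hS T hT y
    have h1 : Tendsto (fun _ : ℕ => (1:ℝ)) atTop (nhds 0) := h.congr hy
    exact absurd (tendsto_nhds_unique h1 tendsto_const_nhds) (by norm_num)
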